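/- Let L > 0, p ∈ (0,1), and let s₀ ∈ ℝ satisfy p = 1 − L · ∫_{s₀}^{s₀ + 1/L} Φ(s) ds. Then L · (Φ(s₀ + 1/L) − Φ(s₀)) ≤ φ(Φ⁻¹(p)). -/

import Mathlib

open MeasureTheory Real

/-- Standard normal density `φ`. -/
noncomputable def stdGaussPDF (t : ℝ) : ℝ :=
  (Real.sqrt (2 * π))⁻¹ * Real.exp (-t ^ 2 / 2)

/-- Standard normal cumulative distribution function `Φ`. -/
noncomputable def stdGaussCDF (x : ℝ) : ℝ := ∫ t in Set.Iic x, stdGaussPDF t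

section Helpers
open Filter Set Topology

lemma pdf_pos (t : ℝ) : 0 < stdGaussPDF t := by
  unfold stdGaussPDF; positivity

lemma pdf_cont : Continuous stdGaussPDF := by
  unfold stdGaussPDF; fun_prop

lemma pdf_eq (t : ℝ) : stdGaussPDF t = (Real.sqrt (2*π))⁻¹ * Real.exp (-(1/2) * t^2) := by
  unfold stdGaussPDF; ring_nf

lemma pdf_integrable : Integrable stdGaussPDF := by
  have h : Integrable (fun t : ℝ => Real.exp (-(1/2:ℝ) * t^2)) :=
    integrable_exp_neg_mul_sq (by norm_num)
  have h2 := h.const_mul ((Real.sqrt (2*π))⁻¹)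
  have : stdGaussPDF = fun t => (Real.sqrt (2*π))⁻¹ * Real.exp (-(1/2:ℝ) * t^2) := funext pdf_eq
  rw [this]; exact h2

lemma pdf_total : ∫ t, stdGaussPDF t = 1 := by
  have h := integral_gaussian (1/2 : ℝ)
  simp_rw [pdf_eq, MeasureTheory.integral_const_mul _ _, h]
  rw [show (π / (1/2:ℝ)) = 2*π by ring, inv_mul_cancel₀]
  exact Real.sqrt_ne_zero'.mpr (by positivity)

lemma pdf_even (t : ℝ) : stdGaussPDF (-t) = stdGaussPDF t := by
  unfold stdGaussPDF; ring_nf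

lemma cdf_sub (x y : ℝ) :
    stdGaussCDF y - stdGaussCDF x = ∫ t in x..y, stdGaussPDF t := by
  unfold stdGaussCDF
  exact intervalIntegral.integral_Iic_sub_Iic pdf_integrable.integrableOn pdf_integrable.integrableOn

lemma cdf_neg (x : ℝ) : stdGaussCDF (-x) = 1 - stdGaussCDF x := by
  have h1 : stdGaussCDF (-x) = ∫ t in Set.Ioi x, stdGaussPDF t := by
    unfold stdGaussCDF
    rw [show (∫ t in Set.Iic (-x), stdGaussPDF t)
        = ∫ t in Set.Iic (-x), stdGaussPDF (-t) from by simp_rw [pdf_even]]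
    rw [integral_comp_neg_Iic]
    simp
  have h3 := intervalIntegral.integral_Iic_add_Ioi (b := x)
    pdf_integrable.integrableOn pdf_integrable.integrableOn
  rw [pdf_total] at h3
  unfold stdGaussCDF at *
  rw [h1]; linarith

lemma cdf_strictMono : StrictMono stdGaussCDF := by
  intro x y hxy
  have h := cdf_sub x y
  have hpos : 0 < ∫ t in x..y, stdGaussPDF t :=
    intervalIntegral.intervalIntegral_pos_of_pos
      (pdf_cont.intervalIntegrable x y) pdf_pos hxy
  linarith

lemma cdf_hasDerivAt (x : ℝ) : HasDerivAt stdGaussCDF (stdGaussPDF x) x := by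
  have heq : ∀ u, stdGaussCDF u = stdGaussCDF 0 + ∫ t in (0:ℝ)..u, stdGaussPDF t := by
    intro u; rw [← cdf_sub]; ring
  have h : HasDerivAt (fun u => ∫ t in (0:ℝ)..u, stdGaussPDF t) (stdGaussPDF x) x :=
    intervalIntegral.integral_hasDerivAt_right (pdf_cont.intervalIntegrable 0 x)
      (pdf_cont.stronglyMeasurableAtFilter _ _) pdf_cont.continuousAt
  have := (hasDerivAt_const x (stdGaussCDF 0)).add h
  rw [funext heq]; exact this.congr_deriv (zero_add _)

lemma cdf_cont : Continuous stdGaussCDF :=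
  continuous_iff_continuousAt.mpr fun x => (cdf_hasDerivAt x).continuousAt

lemma cdf_tendsto_atTop : Tendsto stdGaussCDF atTop (𝓝 1) := by
  have := (MeasureTheory.aecover_Iic (μ := volume)
    (tendsto_id : Tendsto (id : ℝ → ℝ) atTop atTop)).integral_tendsto_of_countably_generated
    pdf_integrable
  rw [pdf_total] at this
  exact this

lemma cdf_tendsto_atBot : Tendsto stdGaussCDF atBot (𝓝 0) := by
  have h : Tendsto (fun x : ℝ => 1 - stdGaussCDF (-x)) atBot (𝓝 0) := by
    have h2 : Tendsto (fun x : ℝ => stdGaussCDF (-x)) atBot (𝓝 1) :=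
      cdf_tendsto_atTop.comp tendsto_neg_atBot_atTop
    simpa using (tendsto_const_nhds (x := (1:ℝ))).sub h2
  refine h.congr fun x => ?_
  rw [cdf_neg]; ring

lemma cdf_surj {q : ℝ} (hq : q ∈ Set.Ioo (0:ℝ) 1) : ∃ x, stdGaussCDF x = q := by
  obtain ⟨a, ha⟩ := (cdf_tendsto_atBot.eventually (eventually_lt_nhds hq.1)).exists
  obtain ⟨b, hb⟩ := (cdf_tendsto_atTop.eventually (eventually_gt_nhds hq.2)).exists
  have hab : a ≤ b := by
    by_contra hcon
    push_neg at hcon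
    exact absurd (cdf_strictMono hcon) (by linarith)
  obtain ⟨x, _, hx⟩ := intermediate_value_Icc hab cdf_cont.continuousOn
    ⟨ha.le, hb.le⟩
  exact ⟨x, hx⟩

lemma pdf_hasDerivAt (t : ℝ) : HasDerivAt stdGaussPDF (-t * stdGaussPDF t) t := by
  have h1 : HasDerivAt (fun u : ℝ => -u ^ 2 / 2) (-t) t := by
    have := ((hasDerivAt_pow 2 t).neg).div_const 2
    simpa using this.congr_deriv (by ring)
  have h2 := (h1.exp).const_mul ((Real.sqrt (2 * π))⁻¹)
  unfold stdGaussPDF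
  refine h2.congr_deriv ?_
  ring

lemma key_ineq (c s : ℝ) :
    stdGaussPDF s + c * stdGaussCDF s ≤ stdGaussPDF c + c * stdGaussCDF c := by
  set g := fun t => stdGaussPDF t + c * stdGaussCDF t with hg
  have hderiv : ∀ t, HasDerivAt g ((c - t) * stdGaussPDF t) t := by
    intro t
    have := (pdf_hasDerivAt t).add ((cdf_hasDerivAt t).const_mul c)
    refine this.congr_deriv ?_; ring
  have hcont : Continuous g := by
    exact pdf_cont.add (continuous_const.mul cdf_cont)
  rcases le_total s c with hsc | hcs
  · have hmono : MonotoneOn g (Set.Icc s c) := by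
      apply monotoneOn_of_deriv_nonneg (convex_Icc s c) hcont.continuousOn
      · exact fun t _ => ((hderiv t).differentiableAt).differentiableWithinAt
      · intro t ht
        rw [interior_Icc] at ht
        rw [(hderiv t).deriv]
        have := pdf_pos t
        nlinarith [ht.2]
    exact hmono ⟨le_rfl, hsc⟩ ⟨hsc, le_rfl⟩ hsc
  · have hanti : AntitoneOn g (Set.Icc c s) := by
      apply antitoneOn_of_deriv_nonpos (convex_Icc c s) hcont.continuousOn
      · exact fun t _ => ((hderiv t).differentiableAt).differentiableWithinAt
      · intro t ht
        rw [interior_Icc] at ht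
        rw [(hderiv t).deriv]
        have := pdf_pos t
        nlinarith [ht.1]
    exact hanti ⟨le_rfl, hcs⟩ ⟨hcs, le_rfl⟩ hcs

end Helpers

/-- Standard normal quantile function `Φ⁻¹`. -/
noncomputable def stdGaussQuantile : ℝ → ℝ := Function.invFun stdGaussCDF

section Main
open Filter Set Topology

/-- **The Lipschitz-constrained value is below the unconstrained value.** If `s₀` solves
`p = 1 - L ∫_{s₀}^{s₀+1/L} Φ(s) ds` for `p ∈ (0,1)`, then
`L (Φ(s₀ + 1/L) - Φ(s₀)) ≤ φ(Φ⁻¹(p))`. -/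
theorem constrained_value_le_unconstrained (L p s₀ : ℝ) (hL : 0 < L)
    (hp : p ∈ Set.Ioo (0 : ℝ) 1)
    (hs₀ : p = 1 - L * ∫ s in s₀..(s₀ + 1 / L), stdGaussCDF s) :
    L * (stdGaussCDF (s₀ + 1 / L) - stdGaussCDF s₀)
      ≤ stdGaussPDF (stdGaussQuantile p) := by
  have hLinv : (0:ℝ) < 1 / L := by positivity
  set a := s₀ with ha
  set b := s₀ + 1 / L with hb
  have hab : a ≤ b := le_add_of_nonneg_right hLinv.le
  have hint : ∫ s in a..b, stdGaussCDF s = (1 - p) / L := by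
    field_simp
    linarith [hs₀]
  obtain ⟨x, hx⟩ := cdf_surj hp
  have hq : stdGaussCDF (stdGaussQuantile p) = p := Function.invFun_eq ⟨x, hx⟩
  set q := stdGaussQuantile p with hqdef
  set c := -q with hc
  have hΦc : stdGaussCDF c = 1 - p := by rw [hc, cdf_neg, hq]
  have hφc : stdGaussPDF c = stdGaussPDF q := pdf_even q
  have hmono := intervalIntegral.integral_mono_on (μ := volume)
    (f := fun s => stdGaussPDF s + c * stdGaussCDF s)
    (g := fun _ => stdGaussPDF c + c * stdGaussCDF c) hab
    ((pdf_cont.intervalIntegrable a b).add ((cdf_cont.intervalIntegrable a b).const_mul c))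
    intervalIntegrable_const
    (fun s _ => key_ineq c s)
  rw [intervalIntegral.integral_add (pdf_cont.intervalIntegrable a b)
      ((cdf_cont.intervalIntegrable a b).const_mul c),
    intervalIntegral.integral_const_mul, hint, ← cdf_sub,
    intervalIntegral.integral_const, hΦc, hφc] at hmono
  have hba : b - a = 1 / L := by rw [hb, ha]; ring
  rw [hba, smul_eq_mul] at hmono
  have hexp : (1/L) * (stdGaussPDF q + c*(1-p))
      = (1/L) * stdGaussPDF q + c * ((1-p)/L) := by ring
  rw [hexp] at hmono
  have hkey : stdGaussCDF b - stdGaussCDF a ≤ (1/L) * stdGaussPDF q := by linarith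
  calc L * (stdGaussCDF b - stdGaussCDF a) ≤ L * ((1/L) * stdGaussPDF q) :=
        mul_le_mul_of_nonneg_left hkey hL.le
    _ = stdGaussPDF q := by field_simp

end Main
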